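/- Let L be a divisorial principally generated C-lattice lattice domain, let a ∈ L with a ≠ 0 and a ≠ 1, and let p be a maximal element of L with a ≤ p. Then ⋀ { b ∈ L | a ≤ b and b ≰ p } ≰ p; that is, there exists a smallest element a(p) of L satisfying a ≤ a(p) and a(p) ≰ p. -/

import Mathlib

/-- A multiplicative lattice: a complete lattice (bottom `⊥` playing the role of `0`)
which is a commutative monoid whose identity `1` is the top element, and in which
multiplication distributes over arbitrary joins. -/
class MulLattice (L : Type*) extends CompleteLattice L, CommMonoid L where
  one_eq_top : (1 : L) = ⊤
  mul_sSup : ∀ (a : L) (S : Set L), a * sSup S = ⨆ b ∈ S, a * b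

namespace MulLattice

variable {L : Type*} [MulLattice L]

/-- The residual `(y : x) = ⋁ {a | a * x ≤ y}`. -/
def res (y x : L) : L := sSup {a : L | a * x ≤ y}

/-- `x` is meet-principal: `y ⊓ z * x = ((y : x) ⊓ z) * x` for all `y, z`. -/
def IsMeetPrincipal (x : L) : Prop := ∀ y z : L, y ⊓ z * x = (res y x ⊓ z) * x

/-- `x` is join-principal: `y ⊔ (z : x) = ((y * x ⊔ z) : x)` for all `y, z`. -/
def IsJoinPrincipal (x : L) : Prop := ∀ y z : L, y ⊔ res z x = res (y * x ⊔ z) x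

/-- `x` is principal if it is both meet-principal and join-principal. -/
def IsPrincipal (x : L) : Prop := IsMeetPrincipal x ∧ IsJoinPrincipal x

/-- A prime element: a proper element `p` with `x * y ≤ p → x ≤ p ∨ y ≤ p`. -/
def IsPrime (p : L) : Prop := p ≠ 1 ∧ ∀ x y : L, x * y ≤ p → x ≤ p ∨ y ≤ p

/-- A maximal element: an element maximal in `L - {1}`. -/
def IsMaximal (m : L) : Prop := m ≠ 1 ∧ ∀ b : L, m < b → b = 1

end MulLattice

/-- A principally generated C-lattice: a multiplicative lattice in which `1` is compact,
compact elements are closed under multiplication, every element is a join of compact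
elements and every element is a join of principal elements. -/
class PGCLattice (L : Type*) extends MulLattice L where
  top_isCompact : IsCompactElement (⊤ : L)
  compact_mul : ∀ a b : L, IsCompactElement a →
    IsCompactElement b → IsCompactElement (a * b)
  compactly_generated : ∀ a : L,
    a = sSup {c : L | IsCompactElement c ∧ c ≤ a}
  principally_generated : ∀ a : L,
    a = sSup {x : L | MulLattice.IsPrincipal x ∧ x ≤ a}

namespace MulLattice

variable {L : Type*}

/-- A lattice domain: `0 = ⊥` is a prime element. -/
def IsLatticeDomain (L : Type*) [MulLattice L] : Prop := IsPrime (⊥ : L)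

variable [PGCLattice L]

open Classical in
/-- The divisorial (`v`-)closure of `a`: equals `(x : (x : a))` for a nonzero principal
`x ≤ a` when such an `x` exists (in a lattice domain this is independent of the choice
of `x`), and `⊥` otherwise (in particular `vclos ⊥ = ⊥`). -/
noncomputable def vclos (a : L) : L :=
  if h : ∃ x : L, IsPrincipal x ∧ x ≠ ⊥ ∧ x ≤ a then
    res h.choose (res h.choose a)
  else ⊥

/-- `a` is divisorial if `a = a_v`. -/
def IsDivisorial (a : L) : Prop := vclos a = a

/-- `L` is h-local: every nonzero prime is below a unique maximal element and
every nonzero element is below only finitely many maximal elements. -/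
def IsHLocal (L : Type*) [PGCLattice L] : Prop :=
  (∀ r : L, r ≠ ⊥ → IsPrime r → ∃! m : L, IsMaximal m ∧ r ≤ m) ∧
  (∀ b : L, b ≠ ⊥ → {m : L | IsMaximal m ∧ b ≤ m}.Finite)

end MulLattice

open MulLattice

section Aux

variable {L : Type*} [MulLattice L]

lemma aux_mul_sup (a b c : L) : a * (b ⊔ c) = a * b ⊔ a * c := by
  have h := MulLattice.mul_sSup a {b, c}
  rw [sSup_pair] at h
  rw [h, iSup_pair]

lemma aux_mul_le_mul_left {b c : L} (h : b ≤ c) (a : L) : a * b ≤ a * c := by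
  have h2 : a * (b ⊔ c) = a * b ⊔ a * c := aux_mul_sup a b c
  rw [sup_eq_right.mpr h] at h2
  rw [h2]; exact le_sup_left

lemma aux_mul_le_mul_right {b c : L} (h : b ≤ c) (a : L) : b * a ≤ c * a := by
  rw [mul_comm b a, mul_comm c a]; exact aux_mul_le_mul_left h a

lemma aux_mul_le_left (a b : L) : a * b ≤ a := by
  have : a * b ≤ a * 1 := aux_mul_le_mul_left (by rw [MulLattice.one_eq_top]; exact le_top) a
  simpa using this

lemma aux_mul_le_right (a b : L) : a * b ≤ b := by
  rw [mul_comm]; exact aux_mul_le_left b a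

lemma aux_mul_bot (a : L) : a * ⊥ = ⊥ := by
  have h := MulLattice.mul_sSup a ∅
  simpa using h

lemma aux_res_mul_le (y x : L) : res y x * x ≤ y := by
  rw [res, mul_comm, MulLattice.mul_sSup]
  exact iSup₂_le fun a ha => by rw [mul_comm]; exact ha

lemma aux_le_res_iff {a y x : L} : a ≤ res y x ↔ a * x ≤ y := by
  constructor
  · intro h
    exact le_trans (aux_mul_le_mul_right h x) (aux_res_mul_le y x)
  · intro h; exact le_sSup h

lemma aux_res_mono {y y' : L} (h : y ≤ y') (x : L) : res y x ≤ res y' x :=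
  sSup_le fun a ha => le_sSup (le_trans ha h)

lemma aux_res_anti {x x' : L} (h : x ≤ x') (y : L) : res y x' ≤ res y x :=
  aux_le_res_iff.mpr (le_trans (aux_mul_le_mul_left h _) (aux_res_mul_le y x'))

lemma aux_le_res_self (x b : L) : x ≤ res x b :=
  aux_le_res_iff.mpr (aux_mul_le_left x b)

lemma aux_res_self (x : L) : res x x = ⊤ :=
  le_antisymm le_top
    (aux_le_res_iff.mpr (by rw [← MulLattice.one_eq_top, one_mul]))

lemma aux_res_bot_right (y : L) : res y ⊥ = ⊤ :=
  le_antisymm le_top (aux_le_res_iff.mpr (by rw [aux_mul_bot]; exact bot_le))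

lemma aux_res_sSup (y : L) (S : Set L) : res y (sSup S) = ⨅ z ∈ S, res y z := by
  apply le_antisymm
  · exact le_iInf₂ fun z hz => aux_res_anti (le_sSup hz) y
  · rw [aux_le_res_iff, MulLattice.mul_sSup]
    exact iSup₂_le fun z hz =>
      le_trans (aux_mul_le_mul_right (iInf₂_le z hz) z) (aux_res_mul_le y z)

lemma aux_res_bot_left (hL : IsLatticeDomain L) {x : L} (hx : x ≠ ⊥) :
    res (⊥ : L) x = ⊥ := by
  apply le_antisymm _ bot_le
  apply sSup_le
  intro u hu
  rcases hL.2 u x hu with h | h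
  · exact h
  · exact absurd (le_bot_iff.mp h) hx

/-- For a nonzero principal `z` in a domain, `((y*z) : z) = y`. -/
lemma aux_res_mul_cancel (hL : IsLatticeDomain L) {z : L} (hz : IsPrincipal z)
    (hz0 : z ≠ ⊥) (y : L) : res (y * z) z = y := by
  have h := hz.2 y ⊥
  rw [aux_res_bot_left hL hz0, sup_bot_eq, sup_bot_eq] at h
  exact h.symm

/-- For meet-principal `z`, `(y : z) * z = y ⊓ z`. -/
lemma aux_res_mul_self {z : L} (hz : IsMeetPrincipal z) (y : L) :
    res y z * z = y ⊓ z := by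
  have h := hz y 1
  rw [one_mul, MulLattice.one_eq_top, inf_top_eq] at h
  exact h.symm

/-- Key lemma: for nonzero principal `x, w, z` with `x*z ≤ w` in a domain,
`(w : z)` is `x`-divisorially closed. -/
lemma aux_key (hL : IsLatticeDomain L) {x w z : L}
    (hx : IsPrincipal x) (hx0 : x ≠ ⊥)
    (hw : IsPrincipal w) (hz : IsPrincipal z) (hz0 : z ≠ ⊥)
    (hxz : x * z ≤ w) :
    res x (res x (res w z)) ≤ res w z := by
  set g := res w z with hg
  set u := res (x * z) w with hu
  have hgz : g * z = w ⊓ z := aux_res_mul_self hz.1 w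
  have h2 : u ≤ res x g := by
    rw [aux_le_res_iff]
    have h3 : (u * g) * z ≤ x * z := by
      calc (u * g) * z = u * (g * z) := mul_assoc _ _ _
        _ = u * (w ⊓ z) := by rw [hgz]
        _ ≤ u * w := aux_mul_le_mul_left inf_le_left u
        _ ≤ x * z := aux_res_mul_le (x * z) w
    have h4 : u * g ≤ res (x * z) z := aux_le_res_iff.mpr h3
    rwa [aux_res_mul_cancel hL hz hz0] at h4
  set t := res x (res x g) with ht
  have h4 : t * u ≤ x :=
    le_trans (aux_mul_le_mul_left h2 t) (aux_res_mul_le x (res x g))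
  have h5 : u * w = x * z := by
    rw [hu, aux_res_mul_self hw.1 (x * z), inf_eq_left.mpr hxz]
  have h6 : (t * z) * x ≤ w * x := by
    calc (t * z) * x = t * (x * z) := by rw [mul_assoc, mul_comm z x]
      _ = t * (u * w) := by rw [h5]
      _ = (t * u) * w := (mul_assoc _ _ _).symm
      _ ≤ x * w := aux_mul_le_mul_right h4 w
      _ = w * x := mul_comm _ _
  have h7 : t * z ≤ res (w * x) x := aux_le_res_iff.mpr h6
  rw [aux_res_mul_cancel hL hx hx0] at h7
  exact aux_le_res_iff.mpr h7

end Aux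

section Aux2

variable {L : Type*} [PGCLattice L]

/-- Independence of the divisorial closure from the chosen principal element. -/
lemma aux_indep (hL : IsLatticeDomain L) {e x x' : L}
    (hx : IsPrincipal x) (hx0 : x ≠ ⊥) (hxe : x ≤ e)
    (hx' : IsPrincipal x') (hx'0 : x' ≠ ⊥) :
    res x (res x e) ≤ res x' (res x' e) := by
  have hPG : res x' e = sSup {z : L | IsPrincipal z ∧ z ≤ res x' e} :=
    PGCLattice.principally_generated _
  rw [hPG, aux_res_sSup]
  refine le_iInf₂ fun z hz => ?_
  by_cases hz0 : z = ⊥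
  · rw [hz0, aux_res_bot_right]; exact le_top
  · have hez : e ≤ res x' z := by
      rw [aux_le_res_iff, mul_comm]
      exact aux_le_res_iff.mp hz.2
    have hxzw : x * z ≤ x' := aux_le_res_iff.mp (le_trans hxe hez)
    have hkey : res x (res x (res x' z)) ≤ res x' z :=
      aux_key hL hx hx0 hx' hz.1 hz0 hxzw
    calc res x (res x e) ≤ res x (res x (res x' z)) :=
          aux_res_anti (aux_res_anti hez x) x
      _ ≤ res x' z := hkey

/-- Transfer of divisoriality to an arbitrary nonzero principal `x ≤ e`. -/
lemma aux_div_transfer (hL : IsLatticeDomain L) (hdiv : ∀ a : L, IsDivisorial a)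
    {e x : L} (hx : IsPrincipal x) (hx0 : x ≠ ⊥) (hxe : x ≤ e) :
    res x (res x e) = e := by
  have hex : ∃ y : L, IsPrincipal y ∧ y ≠ ⊥ ∧ y ≤ e := ⟨x, hx, hx0, hxe⟩
  have h := hdiv e
  rw [IsDivisorial, vclos, dif_pos hex] at h
  obtain ⟨hc1, hc0, hce⟩ := hex.choose_spec
  apply le_antisymm
  · calc res x (res x e) ≤ res hex.choose (res hex.choose e) :=
        aux_indep hL hx hx0 hxe hc1 hc0
      _ = e := h
  · rw [aux_le_res_iff, mul_comm]
    exact aux_res_mul_le x e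

lemma aux_maximal_prime {p u v : L} (hp : IsMaximal p) (huv : u * v ≤ p)
    (hu : ¬ u ≤ p) : v ≤ p := by
  have h1 : p ⊔ u = 1 := by
    exact hp.2 (p ⊔ u) (left_lt_sup.mpr hu)
  calc v = v * 1 := (mul_one v).symm
    _ = v * (p ⊔ u) := by rw [h1]
    _ = v * p ⊔ v * u := aux_mul_sup v p u
    _ ≤ p := sup_le (aux_mul_le_right v p) (by rw [mul_comm]; exact huv)

end Aux2

theorem stmt12 {L : Type*} [PGCLattice L] (hL : IsLatticeDomain L)
    (hdiv : ∀ a : L, IsDivisorial a)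
    (a p : L) (ha0 : a ≠ ⊥) (ha1 : a ≠ 1) (hp : IsMaximal p) (hap : a ≤ p) :
    ¬ sInf {b : L | a ≤ b ∧ ¬ b ≤ p} ≤ p ∧
      ∃ c : L, (a ≤ c ∧ ¬ c ≤ p) ∧ ∀ b : L, a ≤ b → ¬ b ≤ p → c ≤ b := by
  have h1top : (1 : L) = ⊤ := MulLattice.one_eq_top
  set S : Set L := {b : L | a ≤ b ∧ ¬ b ≤ p} with hSdef
  have hp1 : ¬ (⊤ : L) ≤ p := by
    intro h
    exact hp.1 (by rw [h1top]; exact le_antisymm le_top h)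
  have htopS : (⊤ : L) ∈ S := ⟨le_top, hp1⟩
  -- pick a nonzero principal x ≤ a
  obtain ⟨x, hx, hxa, hx0⟩ : ∃ x : L, IsPrincipal x ∧ x ≤ a ∧ x ≠ ⊥ := by
    by_contra hcon
    push_neg at hcon
    apply ha0
    have hPG := PGCLattice.principally_generated a
    rw [hPG]
    apply le_antisymm _ bot_le
    apply sSup_le
    intro z hz
    rw [hcon z hz.1 hz.2]
  -- S is closed under finite meets
  have hSinf : ∀ b₁ ∈ S, ∀ b₂ ∈ S, b₁ ⊓ b₂ ∈ S := by
    intro b₁ hb₁ b₂ hb₂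
    refine ⟨le_inf hb₁.1 hb₂.1, fun h => hb₂.2 ?_⟩
    have hmul : b₁ * b₂ ≤ p :=
      le_trans (le_inf (aux_mul_le_left b₁ b₂) (aux_mul_le_right b₁ b₂)) h
    exact aux_maximal_prime hp hmul hb₁.2
  set c := sInf S with hc
  set T : Set L := (fun b => res x b) '' S with hT
  set J := sSup T with hJ
  have hxJ : x ≤ J := by
    refine le_trans (aux_le_res_self x ⊤) (le_sSup ?_)
    exact Set.mem_image_of_mem _ htopS
  -- every b ∈ S is x-divisorial
  have hbdiv : ∀ b ∈ S, res x (res x b) = b := fun b hb =>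
    aux_div_transfer hL hdiv hx hx0 (le_trans hxa hb.1)
  -- c = res x J
  have hcJ : c = res x J := by
    apply le_antisymm
    · rw [aux_le_res_iff]
      show c * sSup T ≤ x
      rw [MulLattice.mul_sSup]
      refine iSup₂_le fun r hr => ?_
      obtain ⟨b, hb, rfl⟩ := hr
      calc c * res x b ≤ b * res x b := aux_mul_le_mul_right (sInf_le hb) _
        _ = res x b * b := mul_comm _ _
        _ ≤ x := aux_res_mul_le x b
    · apply le_sInf
      intro b hb
      rw [← hbdiv b hb]
      exact aux_res_anti (le_sSup (Set.mem_image_of_mem _ hb)) x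
  have hresc : res x c = J := by
    rw [hcJ]
    exact aux_div_transfer hL hdiv hx hx0 hxJ
  -- the main claim: ¬ c ≤ p
  have hmain : ¬ c ≤ p := by
    intro hcp
    set q := res x p with hq
    have hqx : ¬ q ≤ x := by
      intro h
      have hxq : x ≤ q := aux_le_res_self x p
      have hqeq : q = x := le_antisymm h hxq
      have hpd : res x q = p := aux_div_transfer hL hdiv hx hx0 (le_trans hxa hap)
      rw [hqeq, aux_res_self] at hpd
      exact hp1 (le_of_eq hpd)
    -- pick a compact w ≤ q with w ≰ x
    obtain ⟨w, hwcomp, hwq, hwx⟩ :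
        ∃ w : L, IsCompactElement w ∧ w ≤ q ∧ ¬ w ≤ x := by
      by_contra hcon
      push_neg at hcon
      apply hqx
      have hCG := PGCLattice.compactly_generated q
      rw [hCG]
      apply sSup_le
      intro z hz
      exact hcon z hz.1 hz.2
    have hwJ : w ≤ J := by
      rw [← hresc]
      exact le_trans hwq (aux_res_anti hcp x)
    obtain ⟨t, htT, hwt⟩ := (CompleteLattice.isCompactElement_iff_exists_le_sSup_of_le_sSup (k := w)).mp hwcomp T hwJ
    -- finite meets: find B ∈ S with t.sup id ≤ res x B
    have hfin : ∀ t : Finset L, ↑t ⊆ T → ∃ B ∈ S, t.sup id ≤ res x B := by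
      classical
      intro t
      induction t using Finset.induction_on with
      | empty => intro _; exact ⟨⊤, htopS, by simp⟩
      | @insert r t hr ih =>
        intro hsub
        have hrT : r ∈ T := hsub (by simp)
        obtain ⟨b, hb, rfl⟩ := hrT
        obtain ⟨B, hB, hBle⟩ := ih (fun z hz => hsub (by simp [hz]))
        refine ⟨b ⊓ B, hSinf b hb B hB, ?_⟩
        rw [Finset.sup_insert]
        exact sup_le (aux_res_anti inf_le_left x)
          (le_trans hBle (aux_res_anti inf_le_right x))
    obtain ⟨B, hB, hBle⟩ := hfin t htT
    have hwB : w ≤ res x B := le_trans hwt hBle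
    have hBw : B ≤ res x w := by
      rw [aux_le_res_iff, mul_comm]
      exact aux_le_res_iff.mp hwB
    have hpw : p ≤ res x w := by
      rw [aux_le_res_iff, mul_comm]
      exact aux_le_res_iff.mp hwq
    have hnle : ¬ res x w ≤ p := fun h => hB.2 (le_trans hBw h)
    have hlt : p < res x w := lt_of_le_not_ge hpw hnle
    have htopw : res x w = 1 := hp.2 _ hlt
    apply hwx
    have := aux_res_mul_le x w
    rwa [htopw, one_mul] at this
  exact ⟨hmain, c, ⟨le_sInf fun b hb => hb.1, hmain⟩, fun b hab hbp => sInf_le ⟨hab, hbp⟩⟩
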